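/- Fix integers n1, n2 ≥ 3 and θ ∈ ℝ^5. For every eigenvalue μ of the real symmetric matrix Q̃_{n1,n2}(θ) there exists a vector u ∈ ℂ^{2n} with Q̃_{n1,n2}(θ)·u = μ·u, Euclidean norm ‖u‖₂ = 1, and |u_k| ≤ √2/√(n1·n2) for every index k. -/

import Mathlib

open Matrix

/-- Smallest element of the real spectrum of a real (symmetric) matrix. -/
noncomputable def lamMin {m : Type} [Fintype m] [DecidableEq m] (M : Matrix m m ℝ) : ℝ :=
  sInf (spectrum ℝ M)

/-- Block-Toeplitz block `T_{n1,n2}(x,y,z)`, indexed by pairs `(a,b)` with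
`a ∈ Fin n2`, `b ∈ Fin n1`. -/
def Tmat (n1 n2 : ℕ) (x y z : ℝ) :
    Matrix (Fin n2 × Fin n1) (Fin n2 × Fin n1) ℝ := fun p q =>
  if q = p then y
  else if (q.1 = p.1 ∧ (q.2 : ℕ) = (p.2 : ℕ) + 1) ∨ (q.2 = p.2 ∧ (q.1 : ℕ) = (p.1 : ℕ) + 1) then z
  else if (q.1 = p.1 ∧ (q.2 : ℕ) + 1 = (p.2 : ℕ)) ∨ (q.2 = p.2 ∧ (q.1 : ℕ) + 1 = (p.1 : ℕ)) then x
  else 0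

/-- Block-circulant block `C_{n1,n2}(x,y,z)`. -/
def Cmat (n1 n2 : ℕ) (x y z : ℝ) :
    Matrix (Fin n2 × Fin n1) (Fin n2 × Fin n1) ℝ := fun p q =>
  if q = p then y
  else if (q.1 = p.1 ∧ (q.2 : ℕ) = ((p.2 : ℕ) + 1) % n1) ∨
          (q.2 = p.2 ∧ (q.1 : ℕ) = ((p.1 : ℕ) + 1) % n2) then z
  else if (q.1 = p.1 ∧ ((q.2 : ℕ) + 1) % n1 = (p.2 : ℕ)) ∨
          (q.2 = p.2 ∧ ((q.1 : ℕ) + 1) % n2 = (p.1 : ℕ)) then x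
  else 0

/-- The precision matrix `Q_{n1,n2}(θ)`, `θ = (φ, ρ11, ρ12, ρ21, ρ22)`. -/
def Qmat (n1 n2 : ℕ) (φ ρ11 ρ12 ρ21 ρ22 : ℝ) :
    Matrix ((Fin n2 × Fin n1) ⊕ (Fin n2 × Fin n1)) ((Fin n2 × Fin n1) ⊕ (Fin n2 × Fin n1)) ℝ :=
  Matrix.fromBlocks (Tmat n1 n2 ρ11 1 ρ11) (Tmat n1 n2 ρ21 φ ρ12)
    (Tmat n1 n2 ρ21 φ ρ12)ᵀ (Tmat n1 n2 ρ22 1 ρ22)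

/-- The block-circulant (toroidal) approximation `Q̃_{n1,n2}(θ)`. -/
def Qcmat (n1 n2 : ℕ) (φ ρ11 ρ12 ρ21 ρ22 : ℝ) :
    Matrix ((Fin n2 × Fin n1) ⊕ (Fin n2 × Fin n1)) ((Fin n2 × Fin n1) ⊕ (Fin n2 × Fin n1)) ℝ :=
  Matrix.fromBlocks (Cmat n1 n2 ρ11 1 ρ11) (Cmat n1 n2 ρ21 φ ρ12)
    (Cmat n1 n2 ρ21 φ ρ12)ᵀ (Cmat n1 n2 ρ22 1 ρ22)

section FinAux
variable {n : ℕ} [NeZero n] {c : ℂ}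

lemma finq_val_add_one (p : Fin n) : ((p + 1 : Fin n) : ℕ) = ((p : ℕ) + 1) % n := by
  rw [Fin.add_def, Fin.val_one']
  conv_lhs => rw [← Nat.mod_eq_of_lt p.isLt]
  exact (Nat.add_mod _ _ _).symm

lemma finq_succ_val (p : Fin n) :
    ((p + 1 : Fin n) : ℕ) = if (p : ℕ) + 1 = n then 0 else (p : ℕ) + 1 := by
  rw [finq_val_add_one]
  split_ifs with h
  · rw [h, Nat.mod_self]
  · exact Nat.mod_eq_of_lt (by have := p.isLt; omega)

lemma finq_sub_one_val (p : Fin n) :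
    ((p - 1 : Fin n) : ℕ) = if (p : ℕ) = 0 then n - 1 else (p : ℕ) - 1 := by
  have h := finq_succ_val (p - 1)
  rw [sub_add_cancel] at h
  have hlt := (p - 1).isLt
  have hlt2 := p.isLt
  split_ifs at h ⊢ with h1 h2 <;> omega

lemma finq_cond_succ (p q : Fin n) : (q : ℕ) = ((p : ℕ) + 1) % n ↔ q = p + 1 := by
  rw [← finq_val_add_one, Fin.val_eq_val]

lemma finq_cond_pred (p q : Fin n) : ((q : ℕ) + 1) % n = (p : ℕ) ↔ q = p - 1 := by
  rw [← finq_val_add_one, Fin.val_eq_val, ← eq_sub_iff_add_eq]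

lemma finq_ne1 (hn : 3 ≤ n) (p : Fin n) : p + 1 ≠ p := by
  rw [Fin.ne_iff_vne, finq_succ_val]
  have := p.isLt; split_ifs <;> omega

lemma finq_ne2 (hn : 3 ≤ n) (p : Fin n) : p - 1 ≠ p := by
  rw [Fin.ne_iff_vne, finq_sub_one_val]
  have := p.isLt; split_ifs <;> omega

lemma finq_ne3 (hn : 3 ≤ n) (p : Fin n) : p + 1 ≠ p - 1 := by
  rw [Fin.ne_iff_vne, finq_succ_val, finq_sub_one_val]
  have := p.isLt; split_ifs <;> omega

lemma fin_shift_iff (a b : Fin n) : a = b + 1 ↔ b = a - 1 :=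
  ⟨fun h => by rw [h, add_sub_cancel_right], fun h => by rw [h, sub_add_cancel]⟩

lemma pow_ne_zero_of_root (hc : c ^ n = 1) : c ≠ 0 := by
  intro h
  rw [h, zero_pow (NeZero.ne n)] at hc
  exact zero_ne_one hc

lemma pow_succ_fin (hc : c ^ n = 1) (p : Fin n) :
    c ^ ((p + 1 : Fin n) : ℕ) = c * c ^ (p : ℕ) := by
  rw [finq_succ_val]
  split_ifs with h
  · rw [pow_zero, ← pow_succ', h, hc]
  · rw [pow_succ']

lemma pow_pred_fin (hc : c ^ n = 1) (p : Fin n) :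
    c ^ ((p - 1 : Fin n) : ℕ) = c⁻¹ * c ^ (p : ℕ) := by
  have h := pow_succ_fin hc (p - 1)
  rw [sub_add_cancel] at h
  have hc0 : c ≠ 0 := pow_ne_zero_of_root hc
  field_simp [h]
  rw [h]; ring

lemma abs_one_of_pow_eq_one (hn : n ≠ 0) (h : c ^ n = 1) : ‖c‖ = 1 := by
  have h1 : ‖c‖ ^ n = 1 := by
    rw [← norm_pow, h, norm_one]
  have h0 : 0 ≤ ‖c‖ := norm_nonneg c
  rcases lt_trichotomy (‖c‖) 1 with hlt | heq | hgt
  · have := pow_lt_one₀ h0 hlt hn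
    rw [h1] at this; exact absurd this (lt_irrefl 1)
  · exact heq
  · have := one_lt_pow₀ hgt hn
    rw [h1] at this; exact absurd this (lt_irrefl 1)

end FinAux

section Decomp
variable {n1 n2 : ℕ} [NeZero n1] [NeZero n2]

lemma Cmat_apply_decomp (h1 : 3 ≤ n1) (h2 : 3 ≤ n2) (x y z : ℝ)
    (p q : Fin n2 × Fin n1) :
    ((Cmat n1 n2 x y z).map (fun t : ℝ => (t : ℂ))) p q =
      (y : ℂ) * (if q = p then 1 else 0)
      + z * (if q = (p.1, p.2 + 1) then 1 else 0)
      + z * (if q = (p.1 + 1, p.2) then 1 else 0)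
      + x * (if q = (p.1, p.2 - 1) then 1 else 0)
      + x * (if q = (p.1 - 1, p.2) then 1 else 0) := by
  obtain ⟨p1, p2⟩ := p
  obtain ⟨q1, q2⟩ := q
  have e1 := finq_ne1 h1 p2
  have e2 := finq_ne2 h1 p2
  have e3 := finq_ne3 h1 p2
  have f1 := finq_ne1 h2 p1
  have f2 := finq_ne2 h2 p1
  have f3 := finq_ne3 h2 p1
  simp only [Matrix.map_apply, Cmat, finq_cond_succ, finq_cond_pred, Prod.mk.injEq,
    Prod.ext_iff]
  split_ifs <;> simp_all

lemma Cmat_transpose_map (h1 : 3 ≤ n1) (h2 : 3 ≤ n2) (x y z : ℝ) :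
    ((Cmat n1 n2 x y z).map (fun t : ℝ => (t : ℂ)))ᵀ
      = (Cmat n1 n2 z y x).map (fun t : ℝ => (t : ℂ)) := by
  ext p q
  rw [Matrix.transpose_apply, Cmat_apply_decomp h1 h2, Cmat_apply_decomp h1 h2]
  have i0 : (p = q) ↔ (q = p) := eq_comm
  have i1 : (p = (q.1, q.2 + 1)) ↔ (q = (p.1, p.2 - 1)) := by
    rw [Prod.ext_iff, Prod.ext_iff]
    exact and_congr eq_comm (fin_shift_iff _ _)
  have i2 : (p = (q.1 + 1, q.2)) ↔ (q = (p.1 - 1, p.2)) := by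
    rw [Prod.ext_iff, Prod.ext_iff]
    exact and_congr (fin_shift_iff _ _) eq_comm
  have i3 : (p = (q.1, q.2 - 1)) ↔ (q = (p.1, p.2 + 1)) := by
    rw [Prod.ext_iff, Prod.ext_iff]
    exact and_congr eq_comm (fin_shift_iff _ _).symm
  have i4 : (p = (q.1 - 1, q.2)) ↔ (q = (p.1 + 1, p.2)) := by
    rw [Prod.ext_iff, Prod.ext_iff]
    exact and_congr (fin_shift_iff _ _).symm eq_comm
  rw [if_congr i0 rfl rfl, if_congr i1 rfl rfl, if_congr i2 rfl rfl,
    if_congr i3 rfl rfl, if_congr i4 rfl rfl]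
  ring

lemma Cmat_mulVec_char (h1 : 3 ≤ n1) (h2 : 3 ≤ n2) (x y z : ℝ) (c1 c2 : ℂ)
    (hc1 : c1 ^ n1 = 1) (hc2 : c2 ^ n2 = 1) :
    ((Cmat n1 n2 x y z).map (fun t : ℝ => (t : ℂ))) *ᵥ
      (fun p : Fin n2 × Fin n1 => c2 ^ (p.1 : ℕ) * c1 ^ (p.2 : ℕ))
    = ((y : ℂ) + z * (c1 + c2) + x * (c1⁻¹ + c2⁻¹)) •
      (fun p : Fin n2 × Fin n1 => c2 ^ (p.1 : ℕ) * c1 ^ (p.2 : ℕ)) := by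
  funext p
  show (∑ q, ((Cmat n1 n2 x y z).map (fun t : ℝ => (t : ℂ))) p q
      * (c2 ^ (q.1 : ℕ) * c1 ^ (q.2 : ℕ))) = _
  have : ∀ q, ((Cmat n1 n2 x y z).map (fun t : ℝ => (t : ℂ))) p q
      * (c2 ^ (q.1 : ℕ) * c1 ^ (q.2 : ℕ))
      = (if q = p then (y : ℂ) * (c2 ^ (q.1 : ℕ) * c1 ^ (q.2 : ℕ)) else 0)
      + (if q = (p.1, p.2 + 1) then (z : ℂ) * (c2 ^ (q.1 : ℕ) * c1 ^ (q.2 : ℕ)) else 0)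
      + (if q = (p.1 + 1, p.2) then (z : ℂ) * (c2 ^ (q.1 : ℕ) * c1 ^ (q.2 : ℕ)) else 0)
      + (if q = (p.1, p.2 - 1) then (x : ℂ) * (c2 ^ (q.1 : ℕ) * c1 ^ (q.2 : ℕ)) else 0)
      + (if q = (p.1 - 1, p.2) then (x : ℂ) * (c2 ^ (q.1 : ℕ) * c1 ^ (q.2 : ℕ)) else 0) := by
    intro q
    rw [Cmat_apply_decomp h1 h2]
    split_ifs <;> ring
  rw [Finset.sum_congr rfl (fun q _ => this q)]
  simp only [Finset.sum_add_distrib, Finset.sum_ite_eq' Finset.univ, Finset.mem_univ, if_true]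
  simp only [Pi.smul_apply, smul_eq_mul]
  rw [pow_succ_fin hc1, pow_succ_fin hc2, pow_pred_fin hc1, pow_pred_fin hc2]
  ring
end Decomp

lemma char_orth {n : ℕ} (hn : 0 < n) {ζ : ℂ} (hζ : IsPrimitiveRoot ζ n) (a a0 : Fin n) :
    ∑ j : Fin n, (ζ ^ (a : ℕ) * (ζ ^ (a0 : ℕ))⁻¹) ^ (j : ℕ)
      = if a = a0 then (n : ℂ) else 0 := by
  have hζ0 : ζ ≠ 0 := hζ.ne_zero hn.ne'
  set w := ζ ^ (a : ℕ) * (ζ ^ (a0 : ℕ))⁻¹ with hw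
  rw [Fin.sum_univ_eq_sum_range (fun j => w ^ j) n]
  split_ifs with h
  · subst h
    simp [hw, mul_inv_cancel₀ (pow_ne_zero _ hζ0)]
  · have hw1 : w ≠ 1 := by
      intro hww
      apply h
      have hz : ζ ^ (a : ℕ) = ζ ^ (a0 : ℕ) := by
        rw [hw] at hww
        exact (mul_inv_eq_one₀ (pow_ne_zero _ hζ0)).1 hww
      exact Fin.ext (hζ.pow_inj a.isLt a0.isLt hz)
    have hwn : w ^ n = 1 := by
      rw [hw, mul_pow, inv_pow, ← pow_mul, ← pow_mul, mul_comm (a:ℕ) n, mul_comm (a0:ℕ) n,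
        pow_mul, pow_mul, hζ.pow_eq_one, one_pow, one_pow, inv_one, mul_one]
    have hg := geom_sum_mul w n
    rw [hwn, sub_self] at hg
    rcases mul_eq_zero.1 hg with h' | h'
    · exact h'
    · exact absurd (sub_eq_zero.1 h') hw1

lemma char_span {n1 n2 : ℕ} (h1 : 0 < n1) (h2 : 0 < n2) {ζ1 ζ2 : ℂ}
    (hζ1 : IsPrimitiveRoot ζ1 n1) (hζ2 : IsPrimitiveRoot ζ2 n2)
    (w : Fin n2 × Fin n1 → ℂ)
    (H : ∀ ω : Fin n2 × Fin n1,
      ∑ p : Fin n2 × Fin n1,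
        ζ2 ^ ((p.1 : ℕ) * (ω.1 : ℕ)) * ζ1 ^ ((p.2 : ℕ) * (ω.2 : ℕ)) * w p = 0) :
    w = 0 := by
  funext p0
  have key : (n2 : ℂ) * ((n1 : ℂ) * w p0) = 0 := by
    have A : ∑ p : Fin n2 × Fin n1,
        (if p.1 = p0.1 then (n2 : ℂ) else 0) * ((if p.2 = p0.2 then (n1 : ℂ) else 0) * w p)
        = (n2 : ℂ) * ((n1 : ℂ) * w p0) := by
      rw [Fintype.sum_prod_type]
      simp only [ite_mul, zero_mul, mul_ite, mul_zero]
      simp [Finset.sum_ite_eq' Finset.univ]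
    rw [← A]
    have B : ∀ p : Fin n2 × Fin n1,
        (if p.1 = p0.1 then (n2 : ℂ) else 0) * ((if p.2 = p0.2 then (n1 : ℂ) else 0) * w p)
        = (∑ j : Fin n2, (ζ2 ^ (p.1 : ℕ) * (ζ2 ^ (p0.1 : ℕ))⁻¹) ^ (j : ℕ))
          * ((∑ k : Fin n1, (ζ1 ^ (p.2 : ℕ) * (ζ1 ^ (p0.2 : ℕ))⁻¹) ^ (k : ℕ)) * w p) := by
      intro p
      rw [char_orth h2 hζ2, char_orth h1 hζ1]
    rw [Finset.sum_congr rfl fun p _ => B p]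
    have C : ∀ p : Fin n2 × Fin n1,
        (∑ j : Fin n2, (ζ2 ^ (p.1 : ℕ) * (ζ2 ^ (p0.1 : ℕ))⁻¹) ^ (j : ℕ))
          * ((∑ k : Fin n1, (ζ1 ^ (p.2 : ℕ) * (ζ1 ^ (p0.2 : ℕ))⁻¹) ^ (k : ℕ)) * w p)
        = ∑ ω : Fin n2 × Fin n1,
            ((ζ2 ^ ((p0.1 : ℕ) * (ω.1 : ℕ)))⁻¹ * (ζ1 ^ ((p0.2 : ℕ) * (ω.2 : ℕ)))⁻¹)
              * (ζ2 ^ ((p.1 : ℕ) * (ω.1 : ℕ)) * ζ1 ^ ((p.2 : ℕ) * (ω.2 : ℕ)) * w p) := by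
      intro p
      rw [Fintype.sum_prod_type, Finset.sum_mul]
      refine Finset.sum_congr rfl fun j _ => ?_
      rw [Finset.sum_mul, Finset.mul_sum]
      refine Finset.sum_congr rfl fun k _ => ?_
      rw [mul_pow, mul_pow, inv_pow, inv_pow, ← pow_mul, ← pow_mul, ← pow_mul, ← pow_mul]
      ring
    rw [Finset.sum_congr rfl fun p _ => C p, Finset.sum_comm]
    rw [show (0:ℂ) = ∑ ω : Fin n2 × Fin n1, 0 from (Finset.sum_const_zero).symm]
    refine Finset.sum_congr rfl fun ω _ => ?_
    rw [← Finset.mul_sum, H ω, mul_zero]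
  have hn1 : (n1 : ℂ) ≠ 0 := Nat.cast_ne_zero.2 h1.ne'
  have hn2 : (n2 : ℂ) ≠ 0 := Nat.cast_ne_zero.2 h2.ne'
  have := mul_eq_zero.1 key
  rcases this with h | h
  · exact absurd h hn2
  · rcases mul_eq_zero.1 h with h' | h'
    · exact absurd h' hn1
    · exact h'

lemma build_u {ι : Type} [Fintype ι] [Nonempty ι]
    (N : Matrix (ι ⊕ ι) (ι ⊕ ι) ℂ) (μ α β : ℂ) (eb : ι → ℂ)
    (habs : ∀ p, ‖eb p‖ = 1) (hαβ : ¬(α = 0 ∧ β = 0))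
    (heig : N *ᵥ (Sum.elim (fun p => α * eb p) (fun p => β * eb p))
      = μ • (Sum.elim (fun p => α * eb p) (fun p => β * eb p))) :
    ∃ u : ι ⊕ ι → ℂ, N *ᵥ u = μ • u ∧ (∑ k, ‖u k‖ ^ 2 = 1) ∧
      ∀ k, ‖u k‖ ≤ Real.sqrt 2 / Real.sqrt (Fintype.card ι) := by
  set S : ℝ := ‖α‖ ^ 2 + ‖β‖ ^ 2 with hSdef
  have hS : 0 < S := by
    rcases not_and_or.1 hαβ with h | h
    · have : 0 < ‖α‖ := norm_pos_iff.mpr h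
      have := sq_nonneg (‖β‖)
      positivity
    · have : 0 < ‖β‖ := norm_pos_iff.mpr h
      have := sq_nonneg (‖α‖)
      positivity
  set m : ℕ := Fintype.card ι with hmdef
  have hm : 0 < m := Fintype.card_pos
  have hmR : (0 : ℝ) < (m : ℝ) := by exact_mod_cast hm
  set t : ℝ := Real.sqrt m * Real.sqrt S with htdef
  have hst : 0 < Real.sqrt S := Real.sqrt_pos.2 hS
  have hsm : 0 < Real.sqrt m := Real.sqrt_pos.2 hmR
  have ht : 0 < t := mul_pos hsm hst
  refine ⟨fun k => ((t : ℂ))⁻¹ * Sum.elim (fun p => α * eb p) (fun p => β * eb p) k,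
    ?_, ?_, ?_⟩
  · have h0 : (fun k => ((t : ℂ))⁻¹ * Sum.elim (fun p => α * eb p) (fun p => β * eb p) k)
        = ((t : ℂ))⁻¹ • Sum.elim (fun p => α * eb p) (fun p => β * eb p) := rfl
    rw [h0, Matrix.mulVec_smul, heig, smul_comm]
  · have hta : ‖((t : ℂ))⁻¹‖ = t⁻¹ := by
      rw [norm_inv, Complex.norm_real, Real.norm_eq_abs, abs_of_pos ht]
    have hent : ∀ k, ‖((t : ℂ))⁻¹
          * Sum.elim (fun p => α * eb p) (fun p => β * eb p) k‖ ^ 2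
        = Sum.elim (fun _ : ι => t⁻¹ ^ 2 * ‖α‖ ^ 2)
            (fun _ : ι => t⁻¹ ^ 2 * ‖β‖ ^ 2) k := by
      intro k
      cases k with
      | inl p =>
        simp only [Sum.elim_inl, norm_mul, habs, hta, mul_one]
        ring
      | inr p =>
        simp only [Sum.elim_inr, norm_mul, habs, hta, mul_one]
        ring
    rw [Finset.sum_congr rfl fun k _ => hent k, Fintype.sum_sum_type]
    simp only [Sum.elim_inl, Sum.elim_inr, Finset.sum_const, Finset.card_univ,
      nsmul_eq_mul, ← hmdef]
    have hts : t ^ 2 = (m : ℝ) * S := by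
      rw [htdef, mul_pow, Real.sq_sqrt hmR.le, Real.sq_sqrt hS.le]
    have ht2 : (t⁻¹) ^ 2 = ((m : ℝ) * S)⁻¹ := by
      rw [inv_pow, hts]
    rw [ht2, hSdef]
    field_simp
    exact div_self (hS.ne' : ‖α‖ ^ 2 + ‖β‖ ^ 2 ≠ 0)
  · intro k
    have hα2 : ‖α‖ ≤ Real.sqrt S := by
      rw [hSdef]
      refine (Real.le_sqrt (norm_nonneg α) (by positivity)).mpr ?_
      exact le_add_of_nonneg_right (sq_nonneg _)
    have hβ2 : ‖β‖ ≤ Real.sqrt S := by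
      rw [hSdef]
      refine (Real.le_sqrt (norm_nonneg β) (by positivity)).mpr ?_
      exact le_add_of_nonneg_left (sq_nonneg _)
    have hb : ‖Sum.elim (fun p => α * eb p) (fun p => β * eb p) k‖
        ≤ Real.sqrt S := by
      cases k with
      | inl p => simp only [Sum.elim_inl, norm_mul, habs, mul_one]; exact hα2
      | inr p => simp only [Sum.elim_inr, norm_mul, habs, mul_one]; exact hβ2
    rw [norm_mul, norm_inv, Complex.norm_real, Real.norm_eq_abs, abs_of_pos ht]
    have key : t⁻¹ * ‖Sum.elim (fun p => α * eb p) (fun p => β * eb p) k‖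
        ≤ t⁻¹ * Real.sqrt S :=
      mul_le_mul_of_nonneg_left hb (inv_nonneg.2 ht.le)
    refine key.trans ?_
    have hts2 : t⁻¹ * Real.sqrt S = (Real.sqrt (m : ℝ))⁻¹ := by
      rw [htdef, mul_inv, mul_assoc, inv_mul_cancel₀ hst.ne', mul_one]
    rw [hts2, div_eq_mul_inv]
    have h12 : (1 : ℝ) ≤ Real.sqrt 2 := by
      rw [show (1:ℝ) = Real.sqrt 1 from (Real.sqrt_one).symm]
      exact Real.sqrt_le_sqrt (by norm_num)
    nth_rewrite 1 [← one_mul ((Real.sqrt (m : ℝ))⁻¹)]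
    exact mul_le_mul_of_nonneg_right h12 (inv_nonneg.2 hsm.le)

/-- Every eigenvalue of `Q̃_{n1,n2}(θ)` admits a unit eigenvector all of whose
entries have absolute value at most `√2/√(n1·n2)`. -/
theorem eigenvector_entry_bound (n1 n2 : ℕ) (h1 : 3 ≤ n1) (h2 : 3 ≤ n2)
    (φ ρ11 ρ12 ρ21 ρ22 : ℝ) (μ : ℝ)
    (hμ : μ ∈ spectrum ℝ (Qcmat n1 n2 φ ρ11 ρ12 ρ21 ρ22)) :
    ∃ u : (Fin n2 × Fin n1) ⊕ (Fin n2 × Fin n1) → ℂ,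
      ((Qcmat n1 n2 φ ρ11 ρ12 ρ21 ρ22).map (fun t : ℝ => (t : ℂ))) *ᵥ u = (μ : ℂ) • u ∧
      ∑ k, ‖u k‖ ^ 2 = 1 ∧
      ∀ k, ‖u k‖ ≤ Real.sqrt 2 / Real.sqrt (n1 * n2) := by
  haveI : NeZero n1 := ⟨by omega⟩
  haveI : NeZero n2 := ⟨by omega⟩
  have h1' : 0 < n1 := by omega
  have h2' : 0 < n2 := by omega
  set M := Qcmat n1 n2 φ ρ11 ρ12 ρ21 ρ22 with hM
  set Mc := M.map (fun t : ℝ => (t : ℂ)) with hMcdef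
  -- Step 1: a complex eigenvector
  rw [spectrum.mem_iff] at hμ
  have hdet : ((algebraMap ℝ _ μ) - M).det = 0 := by
    by_contra h
    exact hμ ((Matrix.isUnit_iff_isUnit_det _).2 (isUnit_iff_ne_zero.2 h))
  have hdetC : (((algebraMap ℝ _ μ) - M).map (fun t : ℝ => (t : ℂ))).det = 0 := by
    have h0 : (((algebraMap ℝ _ μ) - M).map (fun t : ℝ => (t : ℂ)))
        = Complex.ofRealHom.mapMatrix ((algebraMap ℝ _ μ) - M) := rfl
    rw [h0, ← RingHom.map_det, hdet, map_zero]
  obtain ⟨v, hv0, hAv⟩ := Matrix.exists_mulVec_eq_zero_iff.2 hdetC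
  have hmap : ((algebraMap ℝ _ μ) - M).map (fun t : ℝ => (t : ℂ))
      = (μ : ℂ) • (1 : Matrix _ _ ℂ) - Mc := by
    ext i j
    simp [Matrix.map_apply, Matrix.sub_apply, Matrix.smul_apply, Matrix.one_apply,
      Algebra.algebraMap_eq_smul_one, apply_ite (fun t : ℝ => (t : ℂ))]
    rfl
  rw [hmap, Matrix.sub_mulVec, sub_eq_zero] at hAv
  have hv : Mc *ᵥ v = (μ : ℂ) • v := by
    rw [← hAv, Matrix.smul_mulVec, Matrix.one_mulVec]
  -- Step 2: block structure
  set v1 : Fin n2 × Fin n1 → ℂ := v ∘ Sum.inl with hv1def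
  set v2 : Fin n2 × Fin n1 → ℂ := v ∘ Sum.inr with hv2def
  have hMc : Mc = Matrix.fromBlocks
      ((Cmat n1 n2 ρ11 1 ρ11).map (fun t : ℝ => (t : ℂ)))
      ((Cmat n1 n2 ρ21 φ ρ12).map (fun t : ℝ => (t : ℂ)))
      (((Cmat n1 n2 ρ21 φ ρ12).map (fun t : ℝ => (t : ℂ)))ᵀ)
      ((Cmat n1 n2 ρ22 1 ρ22).map (fun t : ℝ => (t : ℂ))) := by
    rw [hMcdef, hM, Qcmat, Matrix.fromBlocks_map, Matrix.transpose_map]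
  rw [hMc, Matrix.fromBlocks_mulVec] at hv
  have eq1 : ((Cmat n1 n2 ρ11 1 ρ11).map (fun t : ℝ => (t : ℂ))) *ᵥ v1
      + ((Cmat n1 n2 ρ21 φ ρ12).map (fun t : ℝ => (t : ℂ))) *ᵥ v2
      = fun p => (μ : ℂ) * v1 p :=
    funext fun p => congrFun hv (Sum.inl p)
  have eq2 : (((Cmat n1 n2 ρ21 φ ρ12).map (fun t : ℝ => (t : ℂ)))ᵀ) *ᵥ v1
      + ((Cmat n1 n2 ρ22 1 ρ22).map (fun t : ℝ => (t : ℂ))) *ᵥ v2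
      = fun p => (μ : ℂ) * v2 p :=
    funext fun p => congrFun hv (Sum.inr p)
  -- Step 3: Fourier modes
  set ζ1 : ℂ := Complex.exp (2 * Real.pi * Complex.I / n1) with hζ1def
  set ζ2 : ℂ := Complex.exp (2 * Real.pi * Complex.I / n2) with hζ2def
  have hζ1 : IsPrimitiveRoot ζ1 n1 := Complex.isPrimitiveRoot_exp n1 (by omega)
  have hζ2 : IsPrimitiveRoot ζ2 n2 := Complex.isPrimitiveRoot_exp n2 (by omega)
  have hex : ∃ ω : Fin n2 × Fin n1,
      ¬((∑ p : Fin n2 × Fin n1,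
          ζ2 ^ ((p.1 : ℕ) * (ω.1 : ℕ)) * ζ1 ^ ((p.2 : ℕ) * (ω.2 : ℕ)) * v1 p) = 0
        ∧ (∑ p : Fin n2 × Fin n1,
          ζ2 ^ ((p.1 : ℕ) * (ω.1 : ℕ)) * ζ1 ^ ((p.2 : ℕ) * (ω.2 : ℕ)) * v2 p) = 0) := by
    by_contra hcon
    push_neg at hcon
    have hw1 : v1 = 0 := char_span h1' h2' hζ1 hζ2 v1 fun ω => (hcon ω).1
    have hw2 : v2 = 0 := char_span h1' h2' hζ1 hζ2 v2 fun ω => (hcon ω).2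
    apply hv0
    funext k
    cases k with
    | inl p => exact congrFun hw1 p
    | inr p => exact congrFun hw2 p
  obtain ⟨ω, hω⟩ := hex
  set c1 : ℂ := ζ1 ^ (ω.2 : ℕ) with hc1def
  set c2 : ℂ := ζ2 ^ (ω.1 : ℕ) with hc2def
  have hc1 : c1 ^ n1 = 1 := by
    rw [hc1def, ← pow_mul, mul_comm, pow_mul, hζ1.pow_eq_one, one_pow]
  have hc2 : c2 ^ n2 = 1 := by
    rw [hc2def, ← pow_mul, mul_comm, pow_mul, hζ2.pow_eq_one, one_pow]
  set e : Fin n2 × Fin n1 → ℂ := fun p => c2 ^ (p.1 : ℕ) * c1 ^ (p.2 : ℕ) with hedef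
  have hE : ∀ p : Fin n2 × Fin n1,
      ζ2 ^ ((p.1 : ℕ) * (ω.1 : ℕ)) * ζ1 ^ ((p.2 : ℕ) * (ω.2 : ℕ)) = e p := by
    intro p
    have hep : e p = c2 ^ (p.1 : ℕ) * c1 ^ (p.2 : ℕ) := rfl
    rw [hep, hc1def, hc2def, ← pow_mul, ← pow_mul, mul_comm ((ω.1 : ℕ)) ((p.1 : ℕ)),
      mul_comm ((ω.2 : ℕ)) ((p.2 : ℕ))]
  set α : ℂ := e ⬝ᵥ v1 with hαdef
  set β : ℂ := e ⬝ᵥ v2 with hβdef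
  have hαβ : ¬(α = 0 ∧ β = 0) := by
    intro ⟨ha, hb⟩
    apply hω
    constructor
    · rw [← ha, hαdef, dotProduct]
      exact Finset.sum_congr rfl fun p _ => by rw [hE]
    · rw [← hb, hβdef, dotProduct]
      exact Finset.sum_congr rfl fun p _ => by rw [hE]
  -- Step 4: transformed eigen-equations
  set Λ : ℝ → ℝ → ℝ → ℂ :=
    fun x y z => (y : ℂ) + (x : ℂ) * (c1 + c2) + (z : ℂ) * (c1⁻¹ + c2⁻¹) with hΛdef
  have trans : ∀ (x y z : ℝ) (f : Fin n2 × Fin n1 → ℂ),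
      e ⬝ᵥ (((Cmat n1 n2 x y z).map (fun t : ℝ => (t : ℂ))) *ᵥ f)
      = Λ x y z * (e ⬝ᵥ f) := by
    intro x y z f
    rw [Matrix.dotProduct_mulVec, ← Matrix.mulVec_transpose, Cmat_transpose_map h1 h2,
      hedef, Cmat_mulVec_char h1 h2 z y x c1 c2 hc1 hc2, smul_dotProduct, smul_eq_mul,
      hΛdef]
  have A1 : Λ ρ11 1 ρ11 * α + Λ ρ21 φ ρ12 * β = (μ : ℂ) * α := by
    have h := congrArg (fun f => e ⬝ᵥ f) eq1
    simp only [dotProduct_add] at h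
    rw [trans, trans] at h
    rw [hαdef, hβdef]
    rw [h]
    rw [dotProduct, dotProduct, Finset.mul_sum]
    exact Finset.sum_congr rfl fun p _ => by ring
  have A2 : Λ ρ12 φ ρ21 * α + Λ ρ22 1 ρ22 * β = (μ : ℂ) * β := by
    have h := congrArg (fun f => e ⬝ᵥ f) eq2
    simp only [dotProduct_add] at h
    rw [Cmat_transpose_map h1 h2] at h
    rw [trans, trans] at h
    rw [hαdef, hβdef]
    rw [h]
    rw [dotProduct, dotProduct, Finset.mul_sum]
    exact Finset.sum_congr rfl fun p _ => by ring
  -- Step 5: build eigenvector from dual character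
  set d1 : ℂ := c1⁻¹ with hd1def
  set d2 : ℂ := c2⁻¹ with hd2def
  have hd1 : d1 ^ n1 = 1 := by rw [hd1def, inv_pow, hc1, inv_one]
  have hd2 : d2 ^ n2 = 1 := by rw [hd2def, inv_pow, hc2, inv_one]
  set eb : Fin n2 × Fin n1 → ℂ := fun p => d2 ^ (p.1 : ℕ) * d1 ^ (p.2 : ℕ) with hebdef
  have hc10 : c1 ≠ 0 := pow_ne_zero_of_root hc1
  have hc20 : c2 ≠ 0 := pow_ne_zero_of_root hc2
  have eig : ∀ x y z : ℝ,
      ((Cmat n1 n2 x y z).map (fun t : ℝ => (t : ℂ))) *ᵥ eb = Λ x y z • eb := by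
    intro x y z
    rw [hebdef, Cmat_mulVec_char h1 h2 x y z d1 d2 hd1 hd2]
    congr 1
    rw [hΛdef, hd1def, hd2def, inv_inv, inv_inv]
    ring
  set u0 : (Fin n2 × Fin n1) ⊕ (Fin n2 × Fin n1) → ℂ :=
    Sum.elim (fun p => α * eb p) (fun p => β * eb p) with hu0def
  have heig0 : Mc *ᵥ u0 = (μ : ℂ) • u0 := by
    rw [hMc, Matrix.fromBlocks_mulVec]
    have hl : u0 ∘ Sum.inl = α • eb := rfl
    have hr : u0 ∘ Sum.inr = β • eb := rfl
    rw [hl, hr, Matrix.mulVec_smul, Matrix.mulVec_smul, Matrix.mulVec_smul,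
      Cmat_transpose_map h1 h2, Matrix.mulVec_smul, eig, eig, eig, eig]
    funext k
    cases k with
    | inl p =>
      simp only [Sum.elim_inl, Pi.add_apply, Pi.smul_apply, smul_eq_mul, hu0def]
      linear_combination eb p * A1
    | inr p =>
      simp only [Sum.elim_inr, Pi.add_apply, Pi.smul_apply, smul_eq_mul, hu0def]
      linear_combination eb p * A2
  -- Step 6: normalization via build_u
  have habs : ∀ p : Fin n2 × Fin n1, ‖eb p‖ = 1 := by
    intro p
    rw [hebdef]
    have a1 : ‖d1‖ = 1 := abs_one_of_pow_eq_one (by omega) hd1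
    have a2 : ‖d2‖ = 1 := abs_one_of_pow_eq_one (by omega) hd2
    rw [norm_mul, norm_pow, norm_pow, a1, a2, one_pow, one_pow, one_mul]
  rw [hMcdef, hM] at heig0
  rw [hu0def] at heig0
  haveI : Nonempty (Fin n2 × Fin n1) := ⟨(⟨0, h2'⟩, ⟨0, h1'⟩)⟩
  obtain ⟨u, hu1, hu2, hu3⟩ := build_u _ ((μ : ℂ)) α β eb habs hαβ heig0
  refine ⟨u, hu1, hu2, fun k => ?_⟩
  have hcard : ((Fintype.card (Fin n2 × Fin n1)) : ℝ) = (n1 : ℝ) * n2 := by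
    rw [Fintype.card_prod, Fintype.card_fin, Fintype.card_fin]
    push_cast
    ring
  have h := hu3 k
  rw [hcard] at h
  exact_mod_cast h
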